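/- Let A be a C*-algebra and f, g positive central contractions in A. Then closure(fA) ∩ closure(gA) = closure(fgA). -/

import Mathlib

open Finset in
private lemma aux_geom_bound (n : ℕ) (t : ℝ) (h0 : 0 ≤ t) (h1 : t ≤ 1) :
    (1 - t) * t ^ n ≤ 1 / (n + 1) := by
  rw [le_div_iff₀ (by positivity)]
  have key : (1 - t) * t ^ n * (n + 1) = ∑ _k ∈ range (n + 1), (1 - t) * t ^ n := by
    rw [Finset.sum_const, card_range, nsmul_eq_mul]
    push_cast; ring
  rw [key]
  calc ∑ _k ∈ range (n + 1), (1 - t) * t ^ n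
      ≤ ∑ k ∈ range (n + 1), (1 - t) * t ^ k := by
        refine Finset.sum_le_sum fun k hk => ?_
        exact mul_le_mul_of_nonneg_left
          (pow_le_pow_of_le_one h0 h1 (Nat.lt_succ_iff.mp (Finset.mem_range.mp hk)))
          (by linarith)
    _ = 1 - t ^ (n + 1) := by
        rw [← Finset.mul_sum]
        have := geom_sum_mul t (n + 1)
        nlinarith [this]
    _ ≤ 1 := by nlinarith [pow_nonneg h0 (n + 1)]

/-- for positive central contractions `f, g` in a C*-algebra,
`closure (fA) ∩ closure (gA) = closure (fgA)`. -/
theorem closure_inter_closure_eq_closure_mul_of_central_positive_contractions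
    {A : Type*} [NonUnitalCStarAlgebra A] [PartialOrder A] [StarOrderedRing A]
    (f g : A) (hf_pos : 0 ≤ f) (hg_pos : 0 ≤ g)
    (hf_norm : ‖f‖ ≤ 1) (hg_norm : ‖g‖ ≤ 1)
    (hf_central : ∀ a : A, f * a = a * f) (hg_central : ∀ a : A, g * a = a * g) :
    closure (Set.range (fun b : A => f * b)) ∩ closure (Set.range (fun b : A => g * b))
      = closure (Set.range (fun b : A => f * g * b)) := by
  have hsa : IsSelfAdjoint f := .of_nonneg hf_pos
  apply Set.Subset.antisymm
  · -- hard direction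
    -- spectral bounds on f
    have hspec : ∀ x ∈ quasispectrum ℝ f, 0 ≤ x ∧ x ≤ 1 := by
      intro x hx
      have hx0 : 0 ≤ x := quasispectrum_nonneg_of_nonneg f hf_pos x hx
      refine ⟨hx0, ?_⟩
      have hx' : (⟨x, hx0⟩ : NNReal) ∈ quasispectrum NNReal f :=
        quasispectrum.of_algebraMap_mem (R := NNReal) (S := ℝ) (by exact hx)
      have h1 : (⟨x, hx0⟩ : NNReal) ≤ ‖f‖₊ :=
        CStarAlgebra.le_nnnorm_of_mem_quasispectrum hx'
      have h2 : x ≤ ‖f‖ := by exact_mod_cast h1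
      linarith
    -- the approximate unit
    set h : ℕ → ℝ → ℝ := fun n x => 1 - (1 - x) ^ n with hh
    have hcont : ∀ n, ContinuousOn (h n) (quasispectrum ℝ f) := fun n => by fun_prop
    have hzero : ∀ n, h n 0 = 0 := fun n => by simp [hh]
    set u : ℕ → A := fun n => cfcₙ (h n) f with hu
    -- recursion
    have hrec : ∀ n, u (n + 1) = f + u n - f * u n := by
      intro n
      have h1 : u (n + 1) = cfcₙ (fun x : ℝ => (x + h n x) - x * h n x) f := by
        apply cfcₙ_congr
        intro x _
        simp only [hh]
        ring
      rw [h1,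
        cfcₙ_sub _ _ f (by simp only [hh]; fun_prop) (by simp [hh])
          (by simp only [hh]; fun_prop) (by simp [hh]),
        cfcₙ_add _ _ f (by fun_prop) (by simp) (by simp only [hh]; fun_prop) (by simp [hh]),
        cfcₙ_mul _ _ f (by fun_prop) (by simp) (by simp only [hh]; fun_prop) (by simp [hh]),
        cfcₙ_id' ℝ f]
    -- algebraic membership
    have hmem : ∀ n (b : A), ∃ c : A, u n * (g * b) = f * g * c := by
      intro n
      induction n with
      | zero =>
        intro b
        refine ⟨0, ?_⟩
        have : u 0 = 0 := by
          rw [hu]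
          simpa using cfcₙ_congr (a := f) (f := h 0) (g := fun _ : ℝ => 0)
            (fun x _ => by simp [hh])
        simp [this]
      | succ n ih =>
        intro b
        obtain ⟨c, hc⟩ := ih b
        refine ⟨b + c - f * c, ?_⟩
        have key : f * g * (f * c) = f * (f * g * c) := by
          calc f * g * (f * c) = f * (g * (f * c)) := mul_assoc f g (f * c)
            _ = f * ((f * c) * g) := by rw [hg_central (f * c)]
            _ = f * (f * (c * g)) := by rw [mul_assoc f c g]
            _ = f * (f * (g * c)) := by rw [← hg_central c]
            _ = f * (f * g * c) := by rw [mul_assoc f g c]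
        calc u (n + 1) * (g * b)
            = (f + u n - f * u n) * (g * b) := by rw [hrec n]
          _ = f * (g * b) + u n * (g * b) - f * (u n * (g * b)) := by
              rw [sub_mul, add_mul, mul_assoc f (u n) (g * b)]
          _ = f * g * b + f * g * c - f * g * (f * c) := by
              rw [hc, key, mul_assoc f g b]
          _ = f * g * (b + c - f * c) := by rw [mul_sub, mul_add]
    -- norm bounds
    have hnorm_u : ∀ n, ‖u n‖ ≤ 1 := by
      intro n
      apply norm_cfcₙ_le
      intro x hx
      obtain ⟨hx0, hx1⟩ := hspec x hx
      simp only [hh]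
      rw [Real.norm_eq_abs, abs_le]
      constructor
      · nlinarith [pow_le_one₀ (by linarith : (0:ℝ) ≤ 1 - x) (by linarith : (1:ℝ) - x ≤ 1) (n := n)]
      · nlinarith [pow_nonneg (by linarith : (0:ℝ) ≤ 1 - x) n]
    have hnorm_fu : ∀ n, ‖f - u n * f‖ ≤ 1 / (n + 1) := by
      intro n
      have heq : f - u n * f = cfcₙ (fun x : ℝ => x * (1 - x) ^ n) f := by
        have : cfcₙ (fun x : ℝ => x * (1 - x) ^ n) f
            = cfcₙ (fun x : ℝ => x - h n x * x) f := by
          apply cfcₙ_congr; intro x _; simp only [hh]; ring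
        rw [this,
          cfcₙ_sub _ _ f (by fun_prop) (by simp)
            (by simp only [hh]; fun_prop) (by simp [hh]),
          cfcₙ_mul _ _ f (by simp only [hh]; fun_prop) (by simp [hh]) (by fun_prop) (by simp),
          cfcₙ_id' ℝ f]
      rw [heq]
      apply norm_cfcₙ_le
      intro x hx
      obtain ⟨hx0, hx1⟩ := hspec x hx
      rw [Real.norm_eq_abs,
        abs_of_nonneg (mul_nonneg hx0 (pow_nonneg (by linarith) n))]
      have hb := aux_geom_bound n (1 - x) (by linarith) (by linarith)
      have hx' : x * (1 - x) ^ n = (1 - (1 - x)) * (1 - x) ^ n := by ring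
      rw [hx']
      exact hb
    -- main estimate
    rintro a ⟨haf, hag⟩
    rw [Metric.mem_closure_iff]
    intro ε hε
    obtain ⟨yf, ⟨b, hb⟩, hyf⟩ := Metric.mem_closure_iff.mp haf (ε/4) (by linarith)
    obtain ⟨yg, ⟨c, hc⟩, hyg⟩ := Metric.mem_closure_iff.mp hag (ε/4) (by linarith)
    subst hb hc
    simp only [dist_eq_norm] at hyf hyg
    obtain ⟨n, hn⟩ := exists_nat_gt (‖b‖ / (ε/4))
    have hn' : ‖b‖ * (1 / (n + 1)) < ε / 4 := by
      rw [div_lt_iff₀ (by linarith)] at hn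
      rw [mul_one_div, div_lt_iff₀ (by positivity)]
      nlinarith [norm_nonneg b]
    obtain ⟨c', hc'⟩ := hmem n c
    refine ⟨f * g * c', ⟨c', rfl⟩, ?_⟩
    rw [dist_eq_norm, ← hc']
    have key1 : ‖a - u n * a‖ < 3 * (ε / 4) := by
      have hdecomp : a - u n * a
          = (a - f * b) - u n * (a - f * b) + ((f - u n * f) * b) := by
        simp only [mul_sub, sub_mul, mul_assoc]; abel
      calc ‖a - u n * a‖
          ≤ ‖a - f * b‖ + ‖u n * (a - f * b)‖ + ‖(f - u n * f) * b‖ := by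
            rw [hdecomp]
            exact (norm_add_le _ _).trans (by gcongr; exact norm_sub_le _ _)
        _ ≤ ‖a - f * b‖ + ‖u n‖ * ‖a - f * b‖ + ‖f - u n * f‖ * ‖b‖ := by
            gcongr <;> exact norm_mul_le _ _
        _ < ε/4 + 1 * (ε/4) + 1/(n+1) * ‖b‖ := by
            have h1 : ‖u n‖ * ‖a - f*b‖ ≤ 1 * ‖a - f*b‖ :=
              mul_le_mul_of_nonneg_right (hnorm_u n) (norm_nonneg _)
            have h2 : ‖f - u n * f‖ * ‖b‖ ≤ 1/(n+1) * ‖b‖ :=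
              mul_le_mul_of_nonneg_right (hnorm_fu n) (norm_nonneg _)
            have h3 : 1 * ‖a - f*b‖ < 1 * (ε/4) := by simpa using hyf
            linarith
        _ < 3 * (ε/4) := by rw [mul_comm] at hn'; linarith
    calc ‖a - u n * (g * c)‖
        ≤ ‖a - u n * a‖ + ‖u n * (a - g * c)‖ := by
          have : a - u n * (g * c) = (a - u n * a) + u n * (a - g * c) := by
            rw [mul_sub]; abel
          rw [this]; exact norm_add_le _ _
      _ ≤ ‖a - u n * a‖ + ‖u n‖ * ‖a - g * c‖ := by gcongr; exact norm_mul_le _ _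
      _ < 3 * (ε/4) + 1 * (ε/4) := by
          have h1 : ‖u n‖ * ‖a - g*c‖ ≤ 1 * ‖a - g*c‖ :=
            mul_le_mul_of_nonneg_right (hnorm_u n) (norm_nonneg _)
          have h3 : 1 * ‖a - g*c‖ < 1 * (ε/4) := by simpa using hyg
          linarith
      _ = ε := by ring
  · -- easy direction
    apply Set.subset_inter
    · apply closure_mono
      rintro x ⟨b, rfl⟩
      exact ⟨g * b, by show f * (g * b) = f * g * b; rw [mul_assoc]⟩
    · apply closure_mono
      rintro x ⟨b, rfl⟩
      exact ⟨f * b, by show g * (f * b) = f * g * b; rw [hf_central g, mul_assoc]⟩
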